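/- In the undirected graph G consisting of m := n/5 undirected 5-cycles C_1,...,C_m with cross-cycle edges (v_i^1,v_{i+1}^1), (v_i^2,v_{i+1}^3), (v_i^3,v_{i+1}^5), (v_i^4,v_{i+1}^2), (v_i^5,v_{i+1}^4), where all edges of C_i have weight 1/3^i and all cross-cycle edges have weight 1: for every vertex v_i^k with cross-cycle edge to v_{i+1}^j, the 3-edge path consisting of that cross-cycle edge followed by the two cycle edges of C_{i+1} from v_{i+1}^j to v_{i+1}^{j+2 (mod 5)} is the unique shortest path between its endpoints, of weight 1 + 2/3^{i+1}. -/

import Mathlib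

/-- The weight of a path (list of vertices): sum of weights of consecutive edges. -/
def pathWeight {V : Type} (w : V → V → ℝ) : List V → ℝ
  | [] => 0
  | [_] => 0
  | a :: b :: rest => w a b + pathWeight w (b :: rest)

/-- A nonempty list of vertices is a path if consecutive vertices are joined by edges. -/
def IsPath {V : Type} (E : V → V → Prop) : List V → Prop
  | [] => False
  | [_] => True
  | a :: b :: rest => E a b ∧ IsPath E (b :: rest)

/-- `p` is a shortest path: it is a path, and no path with the same endpoints is shorter. -/
def IsShortestPath {V : Type} (E : V → V → Prop) (w : V → V → ℝ) (p : List V) : Prop :=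
  IsPath E p ∧ ∀ q : List V, IsPath E q → q.head? = p.head? → q.getLast? = p.getLast? →
    pathWeight w p ≤ pathWeight w q

/-- Cross-edge pattern of the undirected construction: the cross edge from
v_i^k goes to v_{i+1}^{2k} (superscripts mod 5). -/
def cross5 (k : Fin 5) : Fin 5 := 2 * k

/-- Edges (symmetric) of the undirected lower-bound construction: the 5-cycle
edges of C_i (1 ≤ i ≤ m) and the cross-cycle edges v_i^k — v_{i+1}^{2k}. -/
def undirE (m : ℕ) (u v : ℕ × Fin 5) : Prop :=
  (u.1 = v.1 ∧ 1 ≤ u.1 ∧ u.1 ≤ m ∧ (v.2 = u.2 + 1 ∨ u.2 = v.2 + 1)) ∨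
  (v.1 = u.1 + 1 ∧ 1 ≤ u.1 ∧ u.1 + 1 ≤ m ∧ v.2 = cross5 u.2) ∨
  (u.1 = v.1 + 1 ∧ 1 ≤ v.1 ∧ v.1 + 1 ≤ m ∧ u.2 = cross5 v.2)

/-- Weights: edges of C_i weigh 1/3^i, cross-cycle edges weigh 1. -/
noncomputable def undirW (u v : ℕ × Fin 5) : ℝ :=
  if u.1 = v.1 then (1 : ℝ) / 3 ^ u.1 else 1

namespace S9

def Dnum : Fin 5 → ℤ := ![0, 10, 4, 6, 8]
def Cnum : Fin 5 → ℤ := ![0, 4, 8, 6, 3]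

def pnum (i : ℕ) (k : Fin 5) (u : ℕ × Fin 5) : ℤ :=
  if u.1 < i then 0
  else if u.1 = i then Dnum (u.2 - k)
  else if u.1 = i + 1 then 4 * 3 ^ (i + 1) + Cnum (u.2 - 2 * k)
  else 4 * 3 ^ (i + 1)

def Tight (i : ℕ) (k : Fin 5) (u v : ℕ × Fin 5) : Prop :=
  (u = (i, k) ∧ v = (i + 1, 2 * k)) ∨
  (u = (i + 1, 2 * k) ∧ v = (i + 1, 2 * k + 1)) ∨
  (u = (i + 1, 2 * k + 1) ∧ v = (i + 1, 2 * k + 2))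

lemma pnum_lt {i : ℕ} {k : Fin 5} {u : ℕ × Fin 5} (h : u.1 < i) : pnum i k u = 0 := by
  simp [pnum, h]

lemma pnum_eq {i : ℕ} {k : Fin 5} {u : ℕ × Fin 5} (h : u.1 = i) :
    pnum i k u = Dnum (u.2 - k) := by
  simp [pnum, h]

lemma pnum_succ {i : ℕ} {k : Fin 5} {u : ℕ × Fin 5} (h : u.1 = i + 1) :
    pnum i k u = 4 * 3 ^ (i + 1) + Cnum (u.2 - 2 * k) := by
  unfold pnum
  rw [if_neg (by omega), if_neg (by omega), if_pos h]

lemma pnum_gt {i : ℕ} {k : Fin 5} {u : ℕ × Fin 5} (h : i + 1 < u.1) :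
    pnum i k u = 4 * 3 ^ (i + 1) := by
  unfold pnum
  rw [if_neg (by omega), if_neg (by omega), if_neg (by omega)]

lemma Dfacts : ∀ b : Fin 5, 0 ≤ Dnum b ∧ Dnum b ≤ 10 := by decide
lemma Cfacts : ∀ b : Fin 5, 0 ≤ Cnum b ∧ Cnum b ≤ 8 := by decide
lemma Dstep : ∀ b : Fin 5, Dnum (b + 1) - Dnum b ≤ 10 ∧ Dnum b - Dnum (b + 1) ≤ 10 := by decide
lemma Cstep1 : ∀ b : Fin 5, Cnum (b + 1) - Cnum b ≤ 4 ∧ (Cnum (b + 1) - Cnum b = 4 → b = 0 ∨ b = 1) := by decide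
lemma Cstep2 : ∀ b : Fin 5, Cnum b - Cnum (b + 1) ≤ 3 := by decide
lemma CDcross : ∀ b : Fin 5, Cnum (2 * b) ≤ Dnum b ∧ (Cnum (2 * b) = Dnum b → b = 0) := by decide

end S9

namespace S9

lemma div_lt_div' {x y c : ℝ} (hc : 0 < c) (h : x < y) : x / c < y / c := by
  rw [div_lt_div_iff₀ hc hc]; exact mul_lt_mul_of_pos_right h hc

lemma key {m i : ℕ} (hi : 1 ≤ i) (k : Fin 5) {u v : ℕ × Fin 5} (h : undirE m u v) :
    ((pnum i k v - pnum i k u : ℤ) : ℝ) / (4 * 3 ^ (i + 1)) < undirW u v ∨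
    (((pnum i k v - pnum i k u : ℤ) : ℝ) / (4 * 3 ^ (i + 1)) = undirW u v ∧ Tight i k u v) := by
  have hden : (0:ℝ) < 4 * 3 ^ (i + 1) := by positivity
  have h9 : (9:ℝ) ≤ 3 ^ (i + 1) := by
    calc (9:ℝ) = 3 ^ 2 := by norm_num
    _ ≤ 3 ^ (i + 1) := by apply pow_le_pow_right₀ (by norm_num); omega
  rcases h with ⟨hj, hj1, _, hstep⟩ | ⟨hj, hj1, hjm, hc⟩ | ⟨hj, hj1, hjm, hc⟩
  · -- same-layer cycle edge
    simp only [undirW]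
    rw [if_pos hj]
    rcases lt_trichotomy u.1 i with hA | hA | hA
    · -- below layer i : both potentials 0
      left
      rw [pnum_lt (show v.1 < i by omega), pnum_lt hA]
      simp only [sub_self, Int.cast_zero, zero_div]
      positivity
    · -- layer i
      left
      rw [pnum_eq (show v.1 = i by omega), pnum_eq hA, hA]
      have hw : (1:ℝ) / 3 ^ i = 12 / (4 * 3 ^ (i + 1)) := by
        field_simp; ring
      rw [hw]
      apply div_lt_div' hden
      have hb : (Dnum (v.2 - k) - Dnum (u.2 - k) : ℤ) < 12 := by
        rcases hstep with h1 | h1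
        · rw [show v.2 - k = (u.2 - k) + 1 by rw [h1]; open Fin.CommRing in ring]
          have := (Dstep (u.2 - k)).1; omega
        · rw [show u.2 - k = (v.2 - k) + 1 by rw [h1]; open Fin.CommRing in ring]
          have := (Dstep (v.2 - k)).2; omega
      exact_mod_cast hb
    · rcases Nat.lt_or_ge (i + 1) u.1 with hB | hB
      · -- above layer i+1
        left
        rw [pnum_gt (show i + 1 < v.1 by omega), pnum_gt hB]
        simp only [sub_self, Int.cast_zero, zero_div]
        positivity
      · -- layer i+1
        have hA1 : u.1 = i + 1 := by omega
        rw [pnum_succ (show v.1 = i + 1 by omega), pnum_succ hA1, hA1]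
        have hw : (1:ℝ) / 3 ^ (i + 1) = 4 / (4 * 3 ^ (i + 1)) := by
          field_simp
        rw [hw]
        rcases hstep with h1 | h1
        · rw [show v.2 - 2 * k = (u.2 - 2 * k) + 1 by rw [h1]; open Fin.CommRing in ring]
          rcases lt_or_eq_of_le (Cstep1 (u.2 - 2 * k)).1 with hlt | heq
          · left
            apply div_lt_div' hden
            have : (4 * 3 ^ (i + 1) + Cnum ((u.2 - 2 * k) + 1) - (4 * 3 ^ (i + 1) + Cnum (u.2 - 2 * k)) : ℤ) < 4 := by omega
            exact_mod_cast this
          · right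
            constructor
            · have h4 : (4 * 3 ^ (i + 1) + Cnum ((u.2 - 2 * k) + 1) - (4 * 3 ^ (i + 1) + Cnum (u.2 - 2 * k)) : ℤ) = 4 := by omega
              rw [h4]; norm_num
            · rcases (Cstep1 (u.2 - 2 * k)).2 heq with h0 | h0
              · have ha : u.2 = 2 * k := by open Fin.CommRing in linear_combination h0
                have hb : v.2 = 2 * k + 1 := by rw [h1, ha]
                exact Or.inr (Or.inl ⟨Prod.ext_iff.mpr ⟨hA1, ha⟩, Prod.ext_iff.mpr ⟨by omega, hb⟩⟩)
              · have ha : u.2 = 2 * k + 1 := by open Fin.CommRing in linear_combination h0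
                have hb : v.2 = 2 * k + 2 := by rw [h1, ha]; open Fin.CommRing in ring
                exact Or.inr (Or.inr ⟨Prod.ext_iff.mpr ⟨hA1, ha⟩, Prod.ext_iff.mpr ⟨by omega, hb⟩⟩)
        · left
          rw [show u.2 - 2 * k = (v.2 - 2 * k) + 1 by rw [h1]; open Fin.CommRing in ring]
          apply div_lt_div' hden
          have : (4 * 3 ^ (i + 1) + Cnum (v.2 - 2 * k) - (4 * 3 ^ (i + 1) + Cnum ((v.2 - 2 * k) + 1)) : ℤ) < 4 := by
            have := Cstep2 (v.2 - 2 * k); omega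
          exact_mod_cast this
  · -- cross edge, going up a layer
    simp only [undirW]
    rw [if_neg (by omega)]
    simp only [cross5] at hc
    rcases lt_trichotomy u.1 i with hA | hA | hA
    · left
      rw [div_lt_one hden]
      rcases Nat.lt_or_ge v.1 i with hB | hB
      · rw [pnum_lt hB, pnum_lt hA]
        push_cast; linarith
      · rw [pnum_eq (show v.1 = i by omega), pnum_lt hA]
        have h10 : ((Dnum (v.2 - k) : ℤ) : ℝ) ≤ 10 := by exact_mod_cast (Dfacts _).2
        push_cast at h10 ⊢; linarith
    · rw [pnum_succ (show v.1 = i + 1 by omega), pnum_eq hA]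
      rw [show v.2 - 2 * k = 2 * (u.2 - k) by rw [hc]; open Fin.CommRing in ring]
      rcases lt_or_eq_of_le (CDcross (u.2 - k)).1 with hlt | heq
      · left
        rw [div_lt_one hden]
        have hZ : (4 * 3 ^ (i + 1) + Cnum (2 * (u.2 - k)) - Dnum (u.2 - k) : ℤ) < 4 * 3 ^ (i + 1) := by omega
        have hR : ((4 * 3 ^ (i + 1) + Cnum (2 * (u.2 - k)) - Dnum (u.2 - k) : ℤ) : ℝ) < ((4 * 3 ^ (i + 1) : ℤ) : ℝ) := by
          exact_mod_cast hZ
        push_cast at hR ⊢; linarith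
      · right
        constructor
        · have h4 : (4 * 3 ^ (i + 1) + Cnum (2 * (u.2 - k)) - Dnum (u.2 - k) : ℤ) = 4 * 3 ^ (i + 1) := by omega
          rw [h4]
          push_cast
          field_simp
        · have h0 : u.2 - k = 0 := (CDcross (u.2 - k)).2 heq
          have ha : u.2 = k := by open Fin.CommRing in linear_combination h0
          have hb : v.2 = 2 * k := by rw [hc, ha]
          exact Or.inl ⟨Prod.ext_iff.mpr ⟨hA, ha⟩, Prod.ext_iff.mpr ⟨by omega, hb⟩⟩
    · left
      rw [div_lt_one hden]
      rcases Nat.lt_or_ge (i + 1) u.1 with hB | hB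
      · rw [pnum_gt (show i + 1 < v.1 by omega), pnum_gt hB]
        push_cast; linarith
      · rw [pnum_gt (show i + 1 < v.1 by omega), pnum_succ (show u.1 = i + 1 by omega)]
        have h8 : (0:ℝ) ≤ ((Cnum (u.2 - 2 * k) : ℤ) : ℝ) := by exact_mod_cast (Cfacts _).1
        push_cast at h8 ⊢; linarith
  · -- cross edge, going down a layer
    simp only [undirW]
    rw [if_neg (by omega)]
    simp only [cross5] at hc
    left
    rw [div_lt_one hden]
    rcases lt_trichotomy v.1 i with hA | hA | hA
    · rcases Nat.lt_or_ge u.1 i with hB | hB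
      · rw [pnum_lt hA, pnum_lt hB]
        push_cast; linarith
      · rw [pnum_lt hA, pnum_eq (show u.1 = i by omega)]
        have h0 : (0:ℝ) ≤ ((Dnum (u.2 - k) : ℤ) : ℝ) := by exact_mod_cast (Dfacts _).1
        push_cast at h0 ⊢; linarith
    · rw [pnum_eq hA, pnum_succ (show u.1 = i + 1 by omega)]
      have h10 : ((Dnum (v.2 - k) : ℤ) : ℝ) ≤ 10 := by exact_mod_cast (Dfacts _).2
      have h0 : (0:ℝ) ≤ ((Cnum (u.2 - 2 * k) : ℤ) : ℝ) := by exact_mod_cast (Cfacts _).1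
      push_cast at h10 h0 ⊢; linarith
    · rcases Nat.lt_or_ge (i + 1) v.1 with hB | hB
      · rw [pnum_gt hB, pnum_gt (show i + 1 < u.1 by omega)]
        push_cast; linarith
      · rw [pnum_succ (show v.1 = i + 1 by omega), pnum_gt (show i + 1 < u.1 by omega)]
        have h8 : ((Cnum (v.2 - 2 * k) : ℤ) : ℝ) ≤ 8 := by exact_mod_cast (Cfacts _).2
        push_cast at h8 ⊢; linarith

end S9

namespace S9

lemma walk_bound {m i : ℕ} (hi : 1 ≤ i) (k : Fin 5) :
    ∀ q : List (ℕ × Fin 5), IsPath (undirE m) q → ∀ u v : ℕ × Fin 5,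
      q.head? = some u → q.getLast? = some v →
      ((pnum i k v - pnum i k u : ℤ) : ℝ) / (4 * 3 ^ (i + 1)) ≤ pathWeight undirW q ∧
      (((pnum i k v - pnum i k u : ℤ) : ℝ) / (4 * 3 ^ (i + 1)) = pathWeight undirW q →
        List.Chain' (Tight i k) q) := by
  intro q
  induction q with
  | nil => intro h; exact absurd h (by simp [IsPath])
  | cons a tail IH =>
    cases tail with
    | nil =>
      intro _ u v hu hv
      simp only [List.head?_cons, Option.some.injEq] at hu
      simp only [List.getLast?_singleton, Option.some.injEq] at hv
      subst hu; subst hv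
      refine ⟨by simp [pathWeight], fun _ => by exact List.isChain_singleton _⟩
    | cons b rest =>
      intro hp u v hu hv
      obtain ⟨hab, hrest⟩ := hp
      simp only [List.head?_cons, Option.some.injEq] at hu
      subst hu
      rw [List.getLast?_cons_cons] at hv
      have hIH := IH hrest b v rfl hv
      have hkey := key (m := m) hi k hab
      have hpw : pathWeight undirW (a :: b :: rest) = undirW a b + pathWeight undirW (b :: rest) := rfl
      have hsplit : ((pnum i k v - pnum i k a : ℤ) : ℝ) / (4 * 3 ^ (i + 1))
          = ((pnum i k v - pnum i k b : ℤ) : ℝ) / (4 * 3 ^ (i + 1))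
            + ((pnum i k b - pnum i k a : ℤ) : ℝ) / (4 * 3 ^ (i + 1)) := by
        push_cast; ring
      have h2 : ((pnum i k b - pnum i k a : ℤ) : ℝ) / (4 * 3 ^ (i + 1)) ≤ undirW a b := by
        rcases hkey with h | h
        · exact h.le
        · exact h.1.le
      constructor
      · rw [hpw, hsplit]
        have := hIH.1
        linarith
      · intro heq
        rw [hpw, hsplit] at heq
        have hB : ((pnum i k v - pnum i k b : ℤ) : ℝ) / (4 * 3 ^ (i + 1)) = pathWeight undirW (b :: rest) := by
          have := hIH.1
          linarith
        have hT : Tight i k a b := by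
          rcases hkey with h | h
          · exfalso; linarith
          · exact h.2
        exact List.isChain_cons_cons.mpr ⟨hT, hIH.2 hB⟩

lemma fin5_no {c : Fin 5} (hc : c ≠ 0) {x : Fin 5} (h : x = x + c) : False := by
  have : c = 0 := by open Fin.CommRing in linear_combination h.symm
  exact hc this

lemma tight_s {i : ℕ} {k : Fin 5} {v : ℕ × Fin 5} (h : Tight i k (i, k) v) :
    v = (i + 1, 2 * k) := by
  rcases h with ⟨h1, h2⟩ | ⟨h1, h2⟩ | ⟨h1, h2⟩
  · exact h2
  · rw [Prod.mk.injEq] at h1; exact absurd h1.1 (by omega)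
  · rw [Prod.mk.injEq] at h1; exact absurd h1.1 (by omega)

lemma tight_a2 {i : ℕ} {k : Fin 5} {v : ℕ × Fin 5} (h : Tight i k (i + 1, 2 * k) v) :
    v = (i + 1, 2 * k + 1) := by
  rcases h with ⟨h1, h2⟩ | ⟨h1, h2⟩ | ⟨h1, h2⟩
  · rw [Prod.mk.injEq] at h1; exact absurd h1.1 (by omega)
  · exact h2
  · rw [Prod.mk.injEq] at h1
    exact (fin5_no (c := 1) (by decide) h1.2).elim

lemma tight_a3 {i : ℕ} {k : Fin 5} {v : ℕ × Fin 5} (h : Tight i k (i + 1, 2 * k + 1) v) :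
    v = (i + 1, 2 * k + 2) := by
  rcases h with ⟨h1, h2⟩ | ⟨h1, h2⟩ | ⟨h1, h2⟩
  · rw [Prod.mk.injEq] at h1; exact absurd h1.1 (by omega)
  · rw [Prod.mk.injEq] at h1
    exact (fin5_no (c := 1) (by decide) h1.2.symm).elim
  · exact h2

lemma tight_a4 {i : ℕ} {k : Fin 5} {v : ℕ × Fin 5} (h : Tight i k (i + 1, 2 * k + 2) v) :
    False := by
  rcases h with ⟨h1, h2⟩ | ⟨h1, h2⟩ | ⟨h1, h2⟩
  · rw [Prod.mk.injEq] at h1; exact absurd h1.1 (by omega)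
  · rw [Prod.mk.injEq] at h1
    exact fin5_no (c := 2) (by decide) h1.2.symm
  · rw [Prod.mk.injEq] at h1
    exact fin5_no (c := 1) (x := 2 * k + 1) (by decide) (by open Fin.CommRing in linear_combination -h1.2)

lemma chain_unique {i : ℕ} (k : Fin 5) :
    ∀ q : List (ℕ × Fin 5), List.Chain' (Tight i k) q →
      q.head? = some (i, k) → q.getLast? = some (i + 1, 2 * k + 2) →
      q = [(i, k), (i + 1, 2 * k), (i + 1, 2 * k + 1), (i + 1, 2 * k + 2)] := by
  intro q hc hh hl
  rcases q with _ | ⟨x1, _ | ⟨x2, _ | ⟨x3, _ | ⟨x4, _ | ⟨x5, r⟩⟩⟩⟩⟩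
  · simp at hh
  · simp only [List.head?_cons, Option.some.injEq] at hh
    simp only [List.getLast?_singleton, Option.some.injEq] at hl
    rw [hh] at hl
    rw [Prod.mk.injEq] at hl
    exact absurd hl.1 (by omega)
  · simp only [List.head?_cons, Option.some.injEq] at hh
    subst hh
    rw [List.Chain', List.isChain_cons_cons] at hc
    have h2 := tight_s hc.1
    subst h2
    simp only [List.getLast?_cons_cons, List.getLast?_singleton, Option.some.injEq] at hl
    rw [Prod.mk.injEq] at hl
    exact (fin5_no (c := 2) (by decide) hl.2).elim
  · simp only [List.head?_cons, Option.some.injEq] at hh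
    subst hh
    rw [List.Chain', List.isChain_cons_cons, List.isChain_cons_cons] at hc
    have h2 := tight_s hc.1
    subst h2
    have h3 := tight_a2 hc.2.1
    subst h3
    simp only [List.getLast?_cons_cons, List.getLast?_singleton, Option.some.injEq] at hl
    rw [Prod.mk.injEq] at hl
    exact (fin5_no (c := 1) (x := 2 * k + 1) (by decide) (by open Fin.CommRing in linear_combination hl.2)).elim
  · simp only [List.head?_cons, Option.some.injEq] at hh
    subst hh
    rw [List.Chain', List.isChain_cons_cons, List.isChain_cons_cons, List.isChain_cons_cons] at hc
    have h2 := tight_s hc.1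
    subst h2
    have h3 := tight_a2 hc.2.1
    subst h3
    have h4 := tight_a3 hc.2.2.1
    subst h4
    rfl
  · simp only [List.head?_cons, Option.some.injEq] at hh
    subst hh
    rw [List.Chain', List.isChain_cons_cons, List.isChain_cons_cons, List.isChain_cons_cons, List.isChain_cons_cons] at hc
    have h2 := tight_s hc.1
    subst h2
    have h3 := tight_a2 hc.2.1
    subst h3
    have h4 := tight_a3 hc.2.2.1
    subst h4
    exact (tight_a4 hc.2.2.2.1).elim

end S9

namespace S9

lemma pnum_s {i : ℕ} (k : Fin 5) : pnum i k (i, k) = 0 := by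
  unfold pnum
  rw [if_neg (by simp), if_pos rfl]
  simp [Dnum]

lemma pnum_t {i : ℕ} (k : Fin 5) : pnum i k (i + 1, 2 * k + 2) = 4 * 3 ^ (i + 1) + 8 := by
  unfold pnum
  rw [if_neg (by simp), if_neg (by simp), if_pos rfl]
  have : (2 * k + 2 : Fin 5) - 2 * k = 2 := by open Fin.CommRing in ring
  simp only [this]
  norm_num [Cnum]; rfl

end S9

open S9

/-- each canonical 3-edge path (cross edge from v_i^k to
v_{i+1}^{2k}, then two cycle edges of C_{i+1}) has weight 1 + 2/3^{i+1} and is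
the unique shortest path between its endpoints. -/
theorem stmt9 (m i : ℕ) (hi : 1 ≤ i) (him : i + 1 ≤ m) (k : Fin 5) :
    IsPath (undirE m)
      [((i, k) : ℕ × Fin 5), (i + 1, cross5 k), (i + 1, cross5 k + 1), (i + 1, cross5 k + 2)] ∧
    pathWeight undirW
      [((i, k) : ℕ × Fin 5), (i + 1, cross5 k), (i + 1, cross5 k + 1), (i + 1, cross5 k + 2)]
        = 1 + 2 / 3 ^ (i + 1) ∧
    ∀ q : List (ℕ × Fin 5), IsPath (undirE m) q →
      q.head? = some ((i, k) : ℕ × Fin 5) →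
      q.getLast? = some ((i + 1, cross5 k + 2) : ℕ × Fin 5) →
      q ≠ [((i, k) : ℕ × Fin 5), (i + 1, cross5 k), (i + 1, cross5 k + 1), (i + 1, cross5 k + 2)] →
      pathWeight undirW q
        > pathWeight undirW
            [((i, k) : ℕ × Fin 5), (i + 1, cross5 k), (i + 1, cross5 k + 1), (i + 1, cross5 k + 2)] := by
  have hW : pathWeight undirW
      [((i, k) : ℕ × Fin 5), (i + 1, cross5 k), (i + 1, cross5 k + 1), (i + 1, cross5 k + 2)]
        = 1 + 2 / 3 ^ (i + 1) := by
    have h1 : undirW ((i, k) : ℕ × Fin 5) (i + 1, cross5 k) = 1 := by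
      unfold undirW; rw [if_neg (by simp)]
    have h2 : undirW ((i + 1, cross5 k) : ℕ × Fin 5) (i + 1, cross5 k + 1) = 1 / 3 ^ (i + 1) := by
      unfold undirW; rw [if_pos rfl]
    have h3 : undirW ((i + 1, cross5 k + 1) : ℕ × Fin 5) (i + 1, cross5 k + 2) = 1 / 3 ^ (i + 1) := by
      unfold undirW; rw [if_pos rfl]
    show undirW _ _ + (undirW _ _ + (undirW _ _ + 0)) = _
    rw [h1, h2, h3]; ring
  refine ⟨?_, hW, ?_⟩
  · refine ⟨?_, ?_, ?_, trivial⟩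
    · exact Or.inr (Or.inl ⟨rfl, hi, him, rfl⟩)
    · exact Or.inl ⟨rfl, by omega, him, Or.inl rfl⟩
    · exact Or.inl ⟨rfl, by omega, him, Or.inl (by show cross5 k + 2 = cross5 k + 1 + 1; open Fin.CommRing in ring)⟩
  · intro q hq hh hl hne
    have hl' : q.getLast? = some ((i + 1, 2 * k + 2) : ℕ × Fin 5) := by
      simpa [cross5] using hl
    have hw := walk_bound (m := m) hi k q hq (i, k) (i + 1, 2 * k + 2) hh hl'
    have hden : (0:ℝ) < 4 * 3 ^ (i + 1) := by positivity
    have hΔ : ((pnum i k (i + 1, 2 * k + 2) - pnum i k (i, k) : ℤ) : ℝ) / (4 * 3 ^ (i + 1))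
        = 1 + 2 / 3 ^ (i + 1) := by
      rw [pnum_t, pnum_s]
      push_cast
      field_simp
      ring
    rcases lt_or_eq_of_le hw.1 with hlt | heq
    · rw [hW]; rw [hΔ] at hlt; exact hlt
    · exfalso
      have hch := hw.2 heq
      have := chain_unique k q hch hh hl'
      apply hne
      rw [this]
      simp [cross5]
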